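/- Let μ and ν be probability measures on ℝ, both absolutely continuous with respect to Lebesgue measure and with finite second moments, with cumulative distribution functions F_μ and F_ν, and let T = Q_ν ∘ F_μ where Q_ν(p) = inf{x : p ≤ F_ν(x)}. Then T is an optimal transport map for the quadratic cost: for every measurable map T' : ℝ → ℝ with T'_#μ = ν, one has ∫ (x − T(x))² dμ(x) ≤ ∫ (x − T'(x))² dμ(x). -/

import Mathlib

open MeasureTheory

/-- The cumulative distribution function of a measure on `ℝ`. -/
noncomputable def cdfFun (μ : Measure ℝ) (x : ℝ) : ℝ :=
  (μ (Set.Iic x)).toReal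

/-- The quantile function of a measure on `ℝ`. -/
noncomputable def quantileFun (μ : Measure ℝ) (p : ℝ) : ℝ :=
  sInf {x : ℝ | p ≤ cdfFun μ x}

open Set Filter ProbabilityTheory

namespace OTProof

/-! ### Basic facts about `cdfFun` -/

lemma cdfFun_eq_cdf (μ : Measure ℝ) [IsProbabilityMeasure μ] : cdfFun μ = ⇑(cdf μ) := by
  funext x; rw [cdfFun, cdf_eq_real, measureReal_def]

lemma cdfFun_mono (μ : Measure ℝ) [IsProbabilityMeasure μ] : Monotone (cdfFun μ) := by
  rw [cdfFun_eq_cdf]; exact monotone_cdf μ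

lemma cdfFun_nonneg (μ : Measure ℝ) (x : ℝ) : 0 ≤ cdfFun μ x := ENNReal.toReal_nonneg

lemma cdfFun_le_one (μ : Measure ℝ) [IsProbabilityMeasure μ] (x : ℝ) : cdfFun μ x ≤ 1 := by
  rw [cdfFun_eq_cdf]; exact cdf_le_one μ x

lemma tendsto_cdfFun_atBot (μ : Measure ℝ) [IsProbabilityMeasure μ] :
    Tendsto (cdfFun μ) atBot (nhds 0) := by
  rw [cdfFun_eq_cdf]; exact tendsto_cdf_atBot μ

lemma tendsto_cdfFun_atTop (μ : Measure ℝ) [IsProbabilityMeasure μ] :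
    Tendsto (cdfFun μ) atTop (nhds 1) := by
  rw [cdfFun_eq_cdf]; exact tendsto_cdf_atTop μ

lemma ofReal_cdfFun (μ : Measure ℝ) [IsProbabilityMeasure μ] (x : ℝ) :
    ENNReal.ofReal (cdfFun μ x) = μ (Iic x) := by
  rw [cdfFun_eq_cdf]; exact ofReal_cdf μ x

lemma measure_singleton_eq_zero {μ : Measure ℝ} (hμ : μ ≪ volume) (a : ℝ) : μ {a} = 0 :=
  hμ (measure_singleton a)

lemma cdfFun_continuous {μ : Measure ℝ} [IsProbabilityMeasure μ] (hμ : μ ≪ volume) :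
    Continuous (cdfFun μ) := by
  rw [cdfFun_eq_cdf]
  rw [continuous_iff_continuousAt]
  intro a
  rw [(monotone_cdf μ).continuousAt_iff_leftLim_eq_rightLim, (cdf μ).rightLim_eq]
  have h1 : μ {a} = 0 := hμ (measure_singleton a)
  rw [← measure_cdf (μ := μ), (cdf μ).measure_singleton] at h1
  have h2 := (monotone_cdf μ).leftLim_le (le_refl a)
  have h3 : cdf μ a - Function.leftLim (cdf μ) a ≤ 0 := by
    by_contra h
    push_neg at h
    simp [ENNReal.ofReal_eq_zero] at h1
    linarith
  linarith

/-! ### The Galois connection between quantile and cdf -/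

lemma quantile_set_bddBelow (ν : Measure ℝ) [IsProbabilityMeasure ν] {p : ℝ} (hp : 0 < p) :
    BddBelow {x : ℝ | p ≤ cdfFun ν x} := by
  have h := (tendsto_cdfFun_atBot ν).eventually (eventually_lt_nhds hp)
  obtain ⟨z, hz⟩ := h.exists
  refine ⟨z, fun w hw => ?_⟩
  by_contra h
  push_neg at h
  exact absurd (le_trans hw (cdfFun_mono ν h.le)) (not_le.2 hz)

lemma quantile_set_nonempty (ν : Measure ℝ) [IsProbabilityMeasure ν] {p : ℝ} (hp : p < 1) :
    {x : ℝ | p ≤ cdfFun ν x}.Nonempty := by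
  have h := (tendsto_cdfFun_atTop ν).eventually (eventually_gt_nhds hp)
  obtain ⟨z, hz⟩ := h.exists
  exact ⟨z, hz.le⟩

lemma le_cdfFun_quantile (ν : Measure ℝ) [IsProbabilityMeasure ν] {p : ℝ}
    (hp0 : 0 < p) (hp1 : p < 1) : p ≤ cdfFun ν (quantileFun ν p) := by
  set S := {x : ℝ | p ≤ cdfFun ν x} with hS
  set c := sInf S with hc
  have hne := quantile_set_nonempty ν hp1
  have hbd := quantile_set_bddBelow ν hp0
  have key : ∀ z ∈ Ioi c, p ≤ cdfFun ν z := by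
    intro z hz
    obtain ⟨w, hwS, hwz⟩ := (csInf_lt_iff hbd hne).1 hz
    exact le_trans hwS (cdfFun_mono ν hwz.le)
  have hrc : ContinuousWithinAt (cdfFun ν) (Ioi c) c := by
    rw [cdfFun_eq_cdf]
    exact ((cdf ν).right_continuous c).mono Ioi_subset_Ici_self
  have : Tendsto (cdfFun ν) (nhdsWithin c (Ioi c)) (nhds (cdfFun ν c)) := hrc.tendsto
  exact ge_of_tendsto this (eventually_nhdsWithin_of_forall key)

lemma quantileFun_le_iff (ν : Measure ℝ) [IsProbabilityMeasure ν] {p y : ℝ}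
    (hp0 : 0 < p) (hp1 : p < 1) : quantileFun ν p ≤ y ↔ p ≤ cdfFun ν y := by
  constructor
  · intro h
    exact le_trans (le_cdfFun_quantile ν hp0 hp1) (cdfFun_mono ν h)
  · intro h
    exact csInf_le (quantile_set_bddBelow ν hp0) h

/-! ### Level sets of the cdf -/

lemma measure_cdf_le (μ : Measure ℝ) [IsProbabilityMeasure μ] (hμ : μ ≪ volume)
    (c : ℝ) (hc0 : 0 ≤ c) (hc1 : c < 1) :
    μ {x | cdfFun μ x ≤ c} = ENNReal.ofReal c := by
  set F := cdfFun μ with hF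
  set A := {x | F x ≤ c} with hA
  have hclosed : IsClosed A := IsClosed.preimage (cdfFun_continuous hμ) isClosed_Iic
  rcases eq_empty_or_nonempty A with hAe | hAne
  · have : c ≤ 0 := by
      by_contra h
      push_neg at h
      obtain ⟨z, hz⟩ := ((tendsto_cdfFun_atBot μ).eventually (eventually_lt_nhds h)).exists
      have hzA : z ∈ A := hz.le
      rw [hAe] at hzA
      exact absurd hzA (Set.notMem_empty z)
    have hc : c = 0 := le_antisymm this hc0
    simp [hAe, hc]
  · have hbdd : BddAbove A := by
      obtain ⟨z, hz⟩ := ((tendsto_cdfFun_atTop μ).eventually (eventually_gt_nhds hc1)).exists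
      refine ⟨z, fun w hw => ?_⟩
      by_contra h
      push_neg at h
      exact absurd (le_trans (cdfFun_mono μ h.le) hw) (not_le.2 hz)
    set a := sSup A with ha
    have haA : a ∈ A := hclosed.csSup_mem hAne hbdd
    have hAeq : A = Iic a := by
      apply Subset.antisymm
      · exact fun x hx => le_csSup hbdd hx
      · intro x hx
        exact le_trans (cdfFun_mono μ hx) haA
    have hFa : F a = c := by
      refine le_antisymm haA ?_
      have key : ∀ z ∈ Ioi a, c ≤ F z := by
        intro z hz
        by_contra h
        push_neg at h
        have : z ∈ A := h.le
        rw [hAeq] at this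
        exact absurd (Set.mem_Iic.1 this) (not_le.2 hz)
      have : Tendsto F (nhdsWithin a (Ioi a)) (nhds (F a)) :=
        ((cdfFun_continuous hμ).continuousAt).continuousWithinAt.tendsto
      exact ge_of_tendsto this (eventually_nhdsWithin_of_forall key)
    rw [hAeq, ← ofReal_cdfFun μ a]
    exact congrArg ENNReal.ofReal hFa

lemma cdf_eq_zero_null (μ : Measure ℝ) [IsProbabilityMeasure μ] (hμ : μ ≪ volume) :
    μ {x | cdfFun μ x ≤ 0} = 0 := by
  have := measure_cdf_le μ hμ 0 le_rfl one_pos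
  simpa using this

lemma cdf_eq_one_null (μ : Measure ℝ) [IsProbabilityMeasure μ] (hμ : μ ≪ volume) :
    μ {x | 1 ≤ cdfFun μ x} = 0 := by
  set F := cdfFun μ with hF
  set B := {x | 1 ≤ F x} with hB
  rcases eq_empty_or_nonempty B with hBe | hBne
  · simp [hBe]
  · have hbdd : BddBelow B := by
      obtain ⟨z, hz⟩ := ((tendsto_cdfFun_atBot μ).eventually (eventually_lt_nhds one_pos)).exists
      refine ⟨z, fun w hw => ?_⟩
      by_contra h
      push_neg at h
      exact absurd (le_trans hw (cdfFun_mono μ h.le)) (not_le.2 hz)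
    have hclosed : IsClosed B := IsClosed.preimage (cdfFun_continuous hμ) isClosed_Ici
    set b := sInf B with hb
    have hbB : b ∈ B := hclosed.csInf_mem hBne hbdd
    have hBsub : B ⊆ Ici b := fun x hx => csInf_le hbdd hx
    have hFb : F b = 1 := le_antisymm (cdfFun_le_one μ b) hbB
    have hIio : μ (Set.Iio b) = μ (Set.Iic b) := by
      refine le_antisymm (measure_mono Set.Iio_subset_Iic_self) ?_
      rw [← Set.Iio_union_right]
      refine le_trans (measure_union_le _ _) ?_
      simp [measure_singleton_eq_zero hμ b]
    have h1 : μ (Set.Iic b) = 1 := by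
      rw [← ofReal_cdfFun μ b, show cdfFun μ b = 1 from hFb]
      simp
    refine le_antisymm ?_ zero_le
    calc μ B ≤ μ (Ici b) := measure_mono hBsub
      _ = 0 := by
          have := measure_compl (μ := μ) (measurableSet_Iio (a := b)) (measure_ne_top μ _)
          rw [compl_Iio] at this
          rw [this, hIio, h1]
          simp

/-! ### The transport map and its measurable version -/

/-- The "good" set where the cdf of `μ` is strictly between 0 and 1. -/
def goodSet (μ : Measure ℝ) : Set ℝ := {x | 0 < cdfFun μ x ∧ cdfFun μ x < 1}

/-- The monotone transport map. -/
noncomputable def Tmap (μ ν : Measure ℝ) : ℝ → ℝ := fun x => quantileFun ν (cdfFun μ x)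

/-- A measurable modification of `Tmap`. -/
noncomputable def Tm (μ ν : Measure ℝ) : ℝ → ℝ := (goodSet μ).indicator (Tmap μ ν)

lemma goodSet_measurable (μ : Measure ℝ) [IsProbabilityMeasure μ] :
    MeasurableSet (goodSet μ) := by
  have h := (cdfFun_mono μ).measurable
  exact (h measurableSet_Ioi).inter (h measurableSet_Iio)

lemma goodSet_compl_null (μ : Measure ℝ) [IsProbabilityMeasure μ] (hμ : μ ≪ volume) :
    μ (goodSet μ)ᶜ = 0 := by
  have hsub : (goodSet μ)ᶜ ⊆ {x | cdfFun μ x ≤ 0} ∪ {x | 1 ≤ cdfFun μ x} := by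
    intro x hx
    rw [goodSet, Set.mem_compl_iff, Set.mem_setOf_eq] at hx
    push_neg at hx
    rcases le_or_gt (cdfFun μ x) 0 with h | h
    · exact Or.inl h
    · exact Or.inr (hx h)
  refine le_antisymm (le_trans (measure_mono hsub) ?_) zero_le
  rw [measure_union_null (cdf_eq_zero_null μ hμ) (cdf_eq_one_null μ hμ)]

lemma goodSet_mem_ae (μ : Measure ℝ) [IsProbabilityMeasure μ] (hμ : μ ≪ volume) :
    ∀ᵐ x ∂μ, x ∈ goodSet μ := by
  rw [ae_iff]
  exact goodSet_compl_null μ hμ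

lemma Tmap_ae_eq_Tm (μ ν : Measure ℝ) [IsProbabilityMeasure μ] (hμ : μ ≪ volume) :
    Tmap μ ν =ᵐ[μ] Tm μ ν := by
  filter_upwards [goodSet_mem_ae μ hμ] with x hx
  rw [Tm, Set.indicator_of_mem hx]

lemma Tmap_monotoneOn (μ ν : Measure ℝ) [IsProbabilityMeasure μ] [IsProbabilityMeasure ν] :
    ∀ x ∈ goodSet μ, ∀ z ∈ goodSet μ, x ≤ z → Tmap μ ν x ≤ Tmap μ ν z := by
  intro x hx z hz hxz
  rw [Tmap, Tmap, quantileFun, quantileFun]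
  refine csInf_le_csInf (quantile_set_bddBelow ν hx.1) (quantile_set_nonempty ν hz.2) ?_
  intro w hw
  exact le_trans (cdfFun_mono μ hxz) hw

lemma Tm_measurable (μ ν : Measure ℝ) [IsProbabilityMeasure μ] [IsProbabilityMeasure ν] :
    Measurable (Tm μ ν) := by
  apply measurable_of_Iio
  intro c
  have hM := goodSet_measurable μ
  have hord : MeasurableSet (goodSet μ ∩ {x | Tmap μ ν x < c}) := by
    apply Set.OrdConnected.measurableSet
    constructor
    intro x hx z hz y hy
    have hyM : y ∈ goodSet μ := by
      constructor
      · exact lt_of_lt_of_le hx.1.1 (cdfFun_mono μ hy.1)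
      · exact lt_of_le_of_lt (cdfFun_mono μ hy.2) hz.1.2
    exact ⟨hyM, lt_of_le_of_lt (Tmap_monotoneOn μ ν y hyM z hz.1 hy.2) hz.2⟩
  have hset : Tm μ ν ⁻¹' (Iio c) =
      (goodSet μ ∩ {x | Tmap μ ν x < c}) ∪ ((goodSet μ)ᶜ ∩ {_x : ℝ | (0:ℝ) < c}) := by
    ext x
    simp only [Set.mem_preimage, Set.mem_Iio, Tm, Set.indicator, Set.mem_union, Set.mem_inter_iff,
      Set.mem_compl_iff, Set.mem_setOf_eq]
    by_cases hx : x ∈ goodSet μ <;> simp [hx]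
  rw [hset]
  by_cases hc : (0:ℝ) < c
  · simp only [hc, Set.setOf_true, Set.inter_univ]
    exact hord.union hM.compl
  · simp only [hc, Set.setOf_false, Set.inter_empty, Set.union_empty]
    exact hord

lemma map_Tm_eq (μ ν : Measure ℝ) [IsProbabilityMeasure μ] [IsProbabilityMeasure ν]
    (hμ : μ ≪ volume) : μ.map (Tm μ ν) = ν := by
  have hmeas := Tm_measurable μ ν
  haveI : IsProbabilityMeasure (μ.map (Tm μ ν)) := Measure.isProbabilityMeasure_map hmeas.aemeasurable
  refine Measure.ext_of_Iic (μ.map (Tm μ ν)) ν ?_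
  intro y
  rw [Measure.map_apply hmeas measurableSet_Iic]
  have hsetae : (Tm μ ν ⁻¹' Iic y) =ᵐ[μ] {x | cdfFun μ x ≤ cdfFun ν y} := by
    rw [Filter.eventuallyEq_set]
    filter_upwards [goodSet_mem_ae μ hμ] with x hx
    simp only [Set.mem_preimage, Set.mem_Iic, Set.mem_setOf_eq, Tm, Set.indicator_of_mem hx]
    exact quantileFun_le_iff ν hx.1 hx.2
  rw [measure_congr hsetae]
  by_cases hGy : cdfFun ν y < 1
  · rw [measure_cdf_le μ hμ _ (cdfFun_nonneg ν y) hGy, ofReal_cdfFun ν y]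
  · have h1 : cdfFun ν y = 1 := le_antisymm (cdfFun_le_one ν y) (not_lt.1 hGy)
    have : {x | cdfFun μ x ≤ cdfFun ν y} = Set.univ := by
      ext x; simp [h1, cdfFun_le_one μ x]
    rw [this, ← ofReal_cdfFun ν y, h1]
    simp

lemma Tm_gt_ae (μ ν : Measure ℝ) [IsProbabilityMeasure μ] [IsProbabilityMeasure ν]
    (hμ : μ ≪ volume) (t : ℝ) :
    {x | t < Tm μ ν x} =ᵐ[μ] {x | cdfFun ν t < cdfFun μ x} := by
  rw [Filter.eventuallyEq_set]
  filter_upwards [goodSet_mem_ae μ hμ] with x hx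
  simp only [Set.mem_setOf_eq, Tm, Set.indicator_of_mem hx]
  rw [← not_le, ← not_le]
  exact not_congr (quantileFun_le_iff ν hx.1 hx.2)

/-! ### Indicator difference integrals -/

lemma ind_diff_eq (a b : ℝ) : (fun t => (Set.Iio a).indicator (fun _ => (1:ℝ)) t
      - (Set.Iio b).indicator (fun _ => (1:ℝ)) t)
    = fun t => (Set.Ico b a).indicator (fun _ => (1:ℝ)) t
      - (Set.Ico a b).indicator (fun _ => (1:ℝ)) t := by
  funext t
  rcases lt_or_ge t a with h1 | h1 <;> rcases lt_or_ge t b with h2 | h2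
  · simp [Set.indicator_apply, Set.mem_Iio, Set.mem_Ico, h1, h2, not_le.2 h1, not_le.2 h2]
  · simp [Set.indicator_apply, Set.mem_Iio, Set.mem_Ico, h1, h2, not_lt.2 h2]
  · simp [Set.indicator_apply, Set.mem_Iio, Set.mem_Ico, h1, h2, not_lt.2 h1]
  · simp [Set.indicator_apply, Set.mem_Iio, Set.mem_Ico, not_lt.2 h1, not_lt.2 h2]

lemma ind_abs_eq (a b : ℝ) : (fun t => |(Set.Iio a).indicator (fun _ => (1:ℝ)) t
      - (Set.Iio b).indicator (fun _ => (1:ℝ)) t|)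
    = fun t => (Set.Ico b a).indicator (fun _ => (1:ℝ)) t
      + (Set.Ico a b).indicator (fun _ => (1:ℝ)) t := by
  funext t
  rcases lt_or_ge t a with h1 | h1 <;> rcases lt_or_ge t b with h2 | h2
  · simp [Set.indicator_apply, Set.mem_Iio, Set.mem_Ico, h1, h2, not_le.2 h1, not_le.2 h2]
  · simp [Set.indicator_apply, Set.mem_Iio, Set.mem_Ico, h1, h2, not_lt.2 h2]
  · simp [Set.indicator_apply, Set.mem_Iio, Set.mem_Ico, h1, h2, not_lt.2 h1]
  · simp [Set.indicator_apply, Set.mem_Iio, Set.mem_Ico, not_lt.2 h1, not_lt.2 h2]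

lemma ind_diff_integrable (a b : ℝ) :
    Integrable (fun t => (Set.Iio a).indicator (fun _ => (1:ℝ)) t
      - (Set.Iio b).indicator (fun _ => (1:ℝ)) t) volume := by
  rw [ind_diff_eq]
  apply Integrable.sub <;>
  · rw [integrable_indicator_iff measurableSet_Ico]
    exact integrableOn_const measure_Ico_lt_top.ne

lemma ind_integral (a b : ℝ) :
    ∫ t, ((Set.Iio a).indicator (fun _ => (1:ℝ)) t
      - (Set.Iio b).indicator (fun _ => (1:ℝ)) t) = a - b := by
  rw [ind_diff_eq]
  have hint : ∀ c d : ℝ, Integrable ((Set.Ico c d).indicator (fun _ => (1:ℝ))) volume := by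
    intro c d
    rw [integrable_indicator_iff measurableSet_Ico]
    exact integrableOn_const measure_Ico_lt_top.ne
  rw [integral_sub (hint b a) (hint a b), integral_indicator measurableSet_Ico,
    integral_indicator measurableSet_Ico]
  simp only [integral_const, smul_eq_mul, mul_one, measureReal_def, Measure.restrict_apply_univ]
  rw [Real.volume_Ico, Real.volume_Ico]
  rcases le_total a b with h | h
  · rw [ENNReal.toReal_ofReal (by linarith : (0:ℝ) ≤ b - a),
      ENNReal.ofReal_eq_zero.2 (by linarith : a - b ≤ 0)]
    simp
  · rw [ENNReal.toReal_ofReal (by linarith : (0:ℝ) ≤ a - b),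
      ENNReal.ofReal_eq_zero.2 (by linarith : b - a ≤ 0)]
    simp

lemma ind_integral_abs (a b : ℝ) :
    ∫ t, |(Set.Iio a).indicator (fun _ => (1:ℝ)) t
      - (Set.Iio b).indicator (fun _ => (1:ℝ)) t| = |a - b| := by
  rw [ind_abs_eq]
  have hint : ∀ c d : ℝ, Integrable ((Set.Ico c d).indicator (fun _ => (1:ℝ))) volume := by
    intro c d
    rw [integrable_indicator_iff measurableSet_Ico]
    exact integrableOn_const measure_Ico_lt_top.ne
  rw [integral_add (hint b a) (hint a b), integral_indicator measurableSet_Ico,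
    integral_indicator measurableSet_Ico]
  simp only [integral_const, smul_eq_mul, mul_one, measureReal_def, Measure.restrict_apply_univ]
  rw [Real.volume_Ico, Real.volume_Ico]
  rcases le_total a b with h | h
  · rw [ENNReal.toReal_ofReal (by linarith : (0:ℝ) ≤ b - a),
      ENNReal.ofReal_eq_zero.2 (by linarith : a - b ≤ 0), abs_of_nonpos (by linarith : a - b ≤ 0)]
    simp
  · rw [ENNReal.toReal_ofReal (by linarith : (0:ℝ) ≤ a - b),
      ENNReal.ofReal_eq_zero.2 (by linarith : b - a ≤ 0),
      abs_of_nonneg (by linarith : (0:ℝ) ≤ a - b)]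
    simp

/-! ### The rearrangement inequality for upper sets -/

lemma upper_set_setIntegral (μ : Measure ℝ) [IsProbabilityMeasure μ]
    (hsing : ∀ a : ℝ, μ {a} = 0) (hint : Integrable (fun x : ℝ => x) μ)
    {A U : Set ℝ} (hA : MeasurableSet A) (hU : IsUpperSet U)
    (hm : μ A = μ U) : ∫ x in A, x ∂μ ≤ ∫ x in U, x ∂μ := by
  rcases eq_empty_or_nonempty U with hUe | hUne
  · subst hUe
    simp only [measure_empty] at hm
    rw [show μ.restrict A = 0 from Measure.restrict_eq_zero.2 hm]
    simp
  by_cases hUu : U = univ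
  · subst hUu
    have hAc : μ Aᶜ = 0 := by
      have := measure_compl hA (measure_ne_top μ A)
      rw [this, hm]
      simp
    have hae : A =ᵐ[μ] (univ : Set ℝ) := ae_eq_univ.2 hAc
    rw [setIntegral_congr_set hae]
  obtain ⟨z, hz⟩ : ∃ z, z ∉ U := by
    by_contra h
    push_neg at h
    exact hUu (eq_univ_of_forall h)
  have hbdd : BddBelow U := by
    refine ⟨z, fun u hu => ?_⟩
    by_contra h
    push_neg at h
    exact hz (hU h.le hu)
  set c := sInf U with hc
  have hIoi : Ioi c ⊆ U := by
    intro x hx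
    obtain ⟨u, huU, hux⟩ := (csInf_lt_iff hbdd hUne).1 hx
    exact hU hux.le huU
  have hIci : U ⊆ Ici c := fun u hu => csInf_le hbdd hu
  have hUae : U =ᵐ[μ] Ioi c := by
    rw [ae_eq_set]
    constructor
    · refine le_antisymm (le_trans (measure_mono ?_) (le_of_eq (hsing c))) zero_le
      intro u hu
      have h1 := hIci hu.1
      have h2 : ¬ c < u := hu.2
      simp only [mem_singleton_iff]
      exact le_antisymm (not_lt.1 h2) h1
    · have : Ioi c \ U = ∅ := by
        rw [diff_eq_empty]
        exact hIoi
      simp [this]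
  rw [setIntegral_congr_set hUae]
  have hmc : μ A = μ (Ioi c) := hm.trans (measure_congr hUae)
  have hxc : Integrable (fun x : ℝ => x - c) μ := hint.sub (integrable_const c)
  have intA : Integrable (A.indicator (fun x => x - c)) μ := hxc.indicator hA
  have intI : Integrable ((Ioi c).indicator (fun x => x - c)) μ := hxc.indicator measurableSet_Ioi
  have hne : ∀ᵐ x ∂μ, x ≠ c := by
    rw [ae_iff]
    simpa using hsing c
  have h0 : ∀ᵐ x ∂μ, (fun x => A.indicator (fun x => x - c) x
      - (Ioi c).indicator (fun x => x - c) x) x ≤ 0 := by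
    filter_upwards [hne] with x hx
    rcases lt_or_gt_of_ne hx with h | h
    · have h1 : (Ioi c).indicator (fun x => x - c) x = 0 :=
        Set.indicator_of_notMem (by simp [not_lt.2 h.le]) _
      rw [h1, sub_zero]
      by_cases hxA : x ∈ A
      · rw [Set.indicator_of_mem hxA]; linarith
      · rw [Set.indicator_of_notMem hxA]
    · have h1 : (Ioi c).indicator (fun x => x - c) x = x - c :=
        Set.indicator_of_mem h _
      rw [h1]
      by_cases hxA : x ∈ A
      · rw [Set.indicator_of_mem hxA]; linarith
      · rw [Set.indicator_of_notMem hxA]; linarith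
  have hI := integral_nonpos_of_ae h0
  rw [integral_sub intA intI, integral_indicator hA, integral_indicator measurableSet_Ioi] at hI
  have eA : ∫ x in A, (x - c) ∂μ = (∫ x in A, x ∂μ) - c * (μ A).toReal := by
    rw [integral_sub hint.integrableOn (integrable_const c), setIntegral_const, smul_eq_mul, measureReal_def]
    ring
  have eI : ∫ x in Ioi c, (x - c) ∂μ = (∫ x in Ioi c, x ∂μ) - c * (μ (Ioi c)).toReal := by
    rw [integral_sub hint.integrableOn (integrable_const c), setIntegral_const, smul_eq_mul, measureReal_def]
    ring
  have hmr : (μ A).toReal = (μ (Ioi c)).toReal := by rw [hmc]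
  rw [eA, eI, hmr] at hI
  linarith

/-! ### Integrability helpers -/

lemma abs_le_sq_add (a : ℝ) : |a| ≤ (a ^ 2 + 1) / 2 := by
  nlinarith [sq_nonneg (|a| - 1), sq_abs a]

lemma integrable_of_sq {μ : Measure ℝ} [IsProbabilityMeasure μ] {f : ℝ → ℝ}
    (hf : AEStronglyMeasurable f μ) (h2 : Integrable (fun x => f x ^ 2) μ) :
    Integrable f μ := by
  refine Integrable.mono' (g := fun x => (f x ^ 2 + 1) / 2) ?_ hf ?_
  · exact ((h2.add (integrable_const 1)).div_const 2)
  · exact Eventually.of_forall fun x => abs_le_sq_add (f x)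

lemma integrable_mul_of_sq {μ : Measure ℝ} [IsProbabilityMeasure μ] {f g : ℝ → ℝ}
    (hf : AEStronglyMeasurable f μ) (hg : AEStronglyMeasurable g μ)
    (hf2 : Integrable (fun x => f x ^ 2) μ) (hg2 : Integrable (fun x => g x ^ 2) μ) :
    Integrable (fun x => f x * g x) μ := by
  refine Integrable.mono' (g := fun x => (f x ^ 2 + g x ^ 2) / 2) ?_ (hf.mul hg) ?_
  · exact ((hf2.add hg2).div_const 2)
  · refine Eventually.of_forall fun x => ?_
    simp only [Real.norm_eq_abs]
    rw [abs_mul]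
    nlinarith [sq_nonneg (|f x| - |g x|), sq_abs (f x), sq_abs (g x), abs_nonneg (f x),
      abs_nonneg (g x)]

/-! ### The key comparison of correlations -/

lemma key_mul_le (μ ν : Measure ℝ) [IsProbabilityMeasure μ] [IsProbabilityMeasure ν]
    (hsing : ∀ a : ℝ, μ {a} = 0)
    (Tm S : ℝ → ℝ) (hTmm : Measurable Tm) (hSm : Measurable S)
    (hmapT : μ.map Tm = ν) (hmapS : μ.map S = ν)
    (U : ℝ → Set ℝ) (hUup : ∀ t, IsUpperSet (U t))
    (hUae : ∀ t, {x | t < Tm x} =ᵐ[μ] U t)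
    (hx2 : Integrable (fun x => x ^ 2) μ)
    (hT2 : Integrable (fun x => Tm x ^ 2) μ) (hS2 : Integrable (fun x => S x ^ 2) μ) :
    ∫ x, x * S x ∂μ ≤ ∫ x, x * Tm x ∂μ := by
  have hxm : AEStronglyMeasurable (fun x : ℝ => x) μ := aestronglyMeasurable_id
  have hx1 : Integrable (fun x : ℝ => x) μ := integrable_of_sq hxm hx2
  have hxT : Integrable (fun x => x * Tm x) μ :=
    integrable_mul_of_sq hxm hTmm.aestronglyMeasurable hx2 hT2
  have hxS : Integrable (fun x => x * S x) μ :=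
    integrable_mul_of_sq hxm hSm.aestronglyMeasurable hx2 hS2
  set f : ℝ → ℝ → ℝ := fun x t => x * ((Set.Iio (Tm x)).indicator (fun _ => (1:ℝ)) t
      - (Set.Iio (S x)).indicator (fun _ => (1:ℝ)) t) with hf
  have hFmeas : Measurable (Function.uncurry f) := by
    have h1 : Function.uncurry f = fun p : ℝ × ℝ =>
        p.1 * ((if p.2 < Tm p.1 then (1:ℝ) else 0) - (if p.2 < S p.1 then (1:ℝ) else 0)) := by
      funext p
      simp [Function.uncurry, hf, Set.indicator_apply]
    rw [h1]
    refine measurable_fst.mul (Measurable.sub ?_ ?_)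
    · exact Measurable.ite (measurableSet_lt measurable_snd (hTmm.comp measurable_fst))
        measurable_const measurable_const
    · exact Measurable.ite (measurableSet_lt measurable_snd (hSm.comp measurable_fst))
        measurable_const measurable_const
  have hFint : Integrable (Function.uncurry f) (μ.prod volume) := by
    refine (integrable_prod_iff hFmeas.aestronglyMeasurable).2 ⟨?_, ?_⟩
    · refine Eventually.of_forall fun x => ?_
      exact (ind_diff_integrable (Tm x) (S x)).const_mul x
    · have heq : (fun x => ∫ t, ‖f x t‖) = fun x => |x| * |Tm x - S x| := by
        funext x
        have : (fun t => ‖f x t‖) = fun t => |x| * |(Set.Iio (Tm x)).indicator (fun _ => (1:ℝ)) t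
            - (Set.Iio (S x)).indicator (fun _ => (1:ℝ)) t| := by
          funext t
          rw [hf]
          simp [abs_mul]
        rw [this, integral_const_mul, ind_integral_abs]
      simp only [Function.uncurry_apply_pair]
      rw [heq]
      refine Integrable.mono' (g := fun x => (x ^ 2 + Tm x ^ 2) / 2 + (x ^ 2 + S x ^ 2) / 2)
        ?_ ?_ ?_
      · exact ((hx2.add hT2).div_const 2).add ((hx2.add hS2).div_const 2)
      · exact (measurable_id.abs.mul ((hTmm.sub hSm).abs)).aestronglyMeasurable
      · refine Eventually.of_forall fun x => ?_
        simp only [Real.norm_eq_abs]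
        rw [abs_of_nonneg (mul_nonneg (abs_nonneg x) (abs_nonneg (Tm x - S x)))]
        have h1 : |x| * |Tm x - S x| ≤ |x| * |Tm x| + |x| * |S x| := by
          rw [← mul_add]
          exact mul_le_mul_of_nonneg_left (abs_sub _ _) (abs_nonneg x)
        have h2 : |x| * |Tm x| ≤ (x ^ 2 + Tm x ^ 2) / 2 := by
          nlinarith [sq_nonneg (|x| - |Tm x|), sq_abs x, sq_abs (Tm x)]
        have h3 : |x| * |S x| ≤ (x ^ 2 + S x ^ 2) / 2 := by
          nlinarith [sq_nonneg (|x| - |S x|), sq_abs x, sq_abs (S x)]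
        linarith
  have hinner : ∀ x, ∫ t, f x t = x * (Tm x - S x) := by
    intro x
    rw [hf]
    simp only
    rw [integral_const_mul, ind_integral]
  have hindT : ∀ t : ℝ, (fun x => x * (Set.Iio (Tm x)).indicator (fun _ => (1:ℝ)) t)
      = {x | t < Tm x}.indicator (fun x => x) := by
    intro t
    funext x
    by_cases h : t < Tm x <;> simp [Set.indicator_apply, h]
  have hindS : ∀ t : ℝ, (fun x => x * (Set.Iio (S x)).indicator (fun _ => (1:ℝ)) t)
      = {x | t < S x}.indicator (fun x => x) := by
    intro t
    funext x
    by_cases h : t < S x <;> simp [Set.indicator_apply, h]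
  have hTset : ∀ t : ℝ, MeasurableSet {x | t < Tm x} :=
    fun t => measurableSet_lt measurable_const hTmm
  have hSset : ∀ t : ℝ, MeasurableSet {x | t < S x} :=
    fun t => measurableSet_lt measurable_const hSm
  have hinner2 : ∀ t, ∫ x, f x t ∂μ
      = (∫ x in {x | t < Tm x}, x ∂μ) - ∫ x in {x | t < S x}, x ∂μ := by
    intro t
    have : (fun x => f x t) = fun x => {x | t < Tm x}.indicator (fun x => x) x
        - {x | t < S x}.indicator (fun x => x) x := by
      funext x
      rw [hf]
      simp only [mul_sub]
      rw [← hindT t, ← hindS t]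
    rw [this, integral_sub (hx1.indicator (hTset t)) (hx1.indicator (hSset t)),
      integral_indicator (hTset t), integral_indicator (hSset t)]
  have hmeq : ∀ t, μ {x | t < S x} = μ (U t) := by
    intro t
    have h1 : μ {x | t < S x} = ν (Set.Ioi t) := by
      rw [← hmapS, Measure.map_apply hSm measurableSet_Ioi]
      rfl
    have h2 : μ (U t) = ν (Set.Ioi t) := by
      rw [← measure_congr (hUae t), ← hmapT, Measure.map_apply hTmm measurableSet_Ioi]
      rfl
    rw [h1, h2]
  have hslice : ∀ t, 0 ≤ ∫ x, f x t ∂μ := by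
    intro t
    rw [hinner2 t]
    have hle : ∫ x in {x | t < S x}, x ∂μ ≤ ∫ x in {x | t < Tm x}, x ∂μ := by
      rw [setIntegral_congr_set (hUae t)]
      exact upper_set_setIntegral μ hsing hx1 (hSset t) (hUup t) (hmeq t)
    linarith
  have hswap := integral_integral_swap hFint
  have hL : ∫ x, ∫ t, f x t ∂volume ∂μ = (∫ x, x * Tm x ∂μ) - ∫ x, x * S x ∂μ := by
    have : (fun x => ∫ t, f x t ∂volume) = fun x => x * Tm x - x * S x := by
      funext x
      rw [hinner x]
      ring
    rw [this, integral_sub hxT hxS]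
  have hR : 0 ≤ ∫ t, ∫ x, f x t ∂μ ∂volume := integral_nonneg hslice
  rw [hswap] at hL
  linarith [hL ▸ hR]

end OTProof

open OTProof

/-- In dimension one, the map `T = Q_ν ∘ F_μ` is an optimal transport map for
the quadratic cost: any other measurable map pushing `μ` to `ν` incurs at least
as large a quadratic transport cost. -/
theorem quantile_comp_cdf_optimal (μ ν : Measure ℝ)
    [IsProbabilityMeasure μ] [IsProbabilityMeasure ν]
    (hμ : μ ≪ volume) (hν : ν ≪ volume)
    (hμ2 : Integrable (fun x => x ^ 2) μ) (hν2 : Integrable (fun x => x ^ 2) ν) :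
    ∀ T' : ℝ → ℝ, Measurable T' → μ.map T' = ν →
      ∫ x, (x - quantileFun ν (cdfFun μ x)) ^ 2 ∂μ ≤ ∫ x, (x - T' x) ^ 2 ∂μ := by
  intro T' hT'meas hT'map
  have hTmMeas := Tm_measurable μ ν
  have hae := Tmap_ae_eq_Tm μ ν hμ
  have hmapTm := map_Tm_eq μ ν hμ
  have hsing := measure_singleton_eq_zero hμ
  -- integrability of squares of the transported maps
  have hsqmeas : AEStronglyMeasurable (fun y : ℝ => y ^ 2) ν :=
    (measurable_id.pow_const 2).aestronglyMeasurable
  have hT2 : Integrable (fun x => Tm μ ν x ^ 2) μ := by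
    have h1 : AEStronglyMeasurable (fun y : ℝ => y ^ 2) (μ.map (Tm μ ν)) := by
      rw [hmapTm]; exact hsqmeas
    have := (integrable_map_measure h1 hTmMeas.aemeasurable).1 (by rw [hmapTm]; exact hν2)
    exact this
  have hS2 : Integrable (fun x => T' x ^ 2) μ := by
    have h1 : AEStronglyMeasurable (fun y : ℝ => y ^ 2) (μ.map T') := by
      rw [hT'map]; exact hsqmeas
    have := (integrable_map_measure h1 hT'meas.aemeasurable).1 (by rw [hT'map]; exact hν2)
    exact this
  -- equality of second moments
  have hmom : ∫ x, Tm μ ν x ^ 2 ∂μ = ∫ x, T' x ^ 2 ∂μ := by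
    have e1 : ∫ y, y ^ 2 ∂ν = ∫ x, Tm μ ν x ^ 2 ∂μ := by
      conv_lhs => rw [← hmapTm]
      rw [integral_map hTmMeas.aemeasurable (by rw [hmapTm]; exact hsqmeas)]
    have e2 : ∫ y, y ^ 2 ∂ν = ∫ x, T' x ^ 2 ∂μ := by
      conv_lhs => rw [← hT'map]
      rw [integral_map hT'meas.aemeasurable (by rw [hT'map]; exact hsqmeas)]
    rw [← e1, ← e2]
  -- the correlation inequality
  have hcorr : ∫ x, x * T' x ∂μ ≤ ∫ x, x * Tm μ ν x ∂μ := by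
    refine key_mul_le μ ν hsing (Tm μ ν) T' hTmMeas hT'meas hmapTm hT'map
      (fun t => {x | cdfFun ν t < cdfFun μ x}) ?_ (fun t => Tm_gt_ae μ ν hμ t) hμ2 hT2 hS2
    intro t
    intro x y hxy hx
    exact lt_of_lt_of_le hx (cdfFun_mono μ hxy)
  -- expand the costs
  have hxm : AEStronglyMeasurable (fun x : ℝ => x) μ := aestronglyMeasurable_id
  have hxT : Integrable (fun x => x * Tm μ ν x) μ :=
    integrable_mul_of_sq hxm hTmMeas.aestronglyMeasurable hμ2 hT2
  have hxS : Integrable (fun x => x * T' x) μ :=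
    integrable_mul_of_sq hxm hT'meas.aestronglyMeasurable hμ2 hS2
  have expand : ∀ (u : ℝ → ℝ), Integrable (fun x => u x ^ 2) μ →
      Integrable (fun x => x * u x) μ →
      ∫ x, (x - u x) ^ 2 ∂μ = (∫ x, x ^ 2 ∂μ) - 2 * (∫ x, x * u x ∂μ) + ∫ x, u x ^ 2 ∂μ := by
    intro u hu2 hxu
    have h1 : (fun x => (x - u x) ^ 2) = fun x => x ^ 2 - 2 * (x * u x) + u x ^ 2 := by
      funext x; ring
    have hint2 : Integrable (fun x => 2 * (x * u x)) μ := by exact hxu.const_mul 2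
    have hint1 : Integrable (fun x => x ^ 2 - 2 * (x * u x)) μ := by exact hμ2.sub hint2
    rw [h1, integral_add hint1 hu2, integral_sub hμ2 hint2, MeasureTheory.integral_const_mul]
  have hLHS : ∫ x, (x - quantileFun ν (cdfFun μ x)) ^ 2 ∂μ = ∫ x, (x - Tm μ ν x) ^ 2 ∂μ := by
    refine integral_congr_ae ?_
    filter_upwards [hae] with x h
    rw [show Tmap μ ν x = quantileFun ν (cdfFun μ x) from rfl] at h
    rw [h]
  rw [hLHS, expand (Tm μ ν) hT2 hxT, expand T' hS2 hxS, hmom]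
  linarith
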